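/- For each vertex x of a one-ended levelled tree, the polynomials P_{x,x} and P_{x,x'} associated to the Jacobi operator have only real, simple zeros; deg P_{x,x'} = deg P_{x,x} + 1, and the zeros of P_{x,x} strictly interlace the zeros of P_{x,x'}: if t_1 < ⋯ < t_n are the zeros of P_{x,x'} then P_{x,x} has n−1 zeros s_1 < ⋯ < s_{n−1} with t_1 < s_1 < t_2 < ⋯ < s_{n−1} < t_n. -/

import Mathlib

open Polynomial Finset
set_option maxHeartbeats 1600000



/-- A one-ended levelled tree: every vertex `x` has a unique upward neighbor
`parent x` (written `x'`) one level up, and a finite set `children x` of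
downward neighbors one level down; the tree is connected with one end. -/
structure JTree where
  V : Type
  parent : V → V
  level : V → ℕ
  level_parent : ∀ x, level (parent x) = level x + 1
  children : V → Finset V
  mem_children : ∀ x y : V, y ∈ children x ↔ parent y = x
  connected : ∀ x y : V, ∃ k l : ℕ, parent^[k] x = parent^[l] y
  subtree_finite : ∀ x : V, {t : V | ∃ k : ℕ, parent^[k] t = x}.Finite

namespace JTree

variable (T : JTree)

/-- `T.descend t x` means `t` belongs to the finite subtree `Γ_x` below (and
including) the vertex `x`. -/
def descend (t x : T.V) : Prop := ∃ k : ℕ, T.parent^[k] t = x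

/-- The Jacobi operator on the tree:
`(Jv)(x) = λ_x v(x') + β_x v(x) + Σ_{y ∈ N_x} λ_y v(y)`. -/
noncomputable def jacobi (lam beta : T.V → ℝ) (v : T.V → ℂ) (x : T.V) : ℂ :=
  (lam x : ℂ) * v (T.parent x) + (beta x : ℂ) * v x +
    ∑ y ∈ T.children x, (lam y : ℂ) * v y

end JTree

section Helpers

lemma pow_neg_one_mul_prod_pos {α : Type*} (s : Finset α) (f : α → ℝ)
    (h : ∀ a ∈ s, f a < 0) : 0 < (-1:ℝ)^(#s) * ∏ a ∈ s, f a := by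
  classical
  induction s using Finset.induction_on with
  | empty => simp
  | insert a s' ha ih =>
    rw [Finset.prod_insert ha, Finset.card_insert_of_notMem ha, pow_succ]
    have h1 : 0 < (-1:ℝ)^(#s') * ∏ a ∈ s', f a := ih (fun b hb => h b (Finset.mem_insert_of_mem hb))
    have h2 : 0 < -f a := by have := h a (Finset.mem_insert_self a s'); linarith
    nlinarith

lemma sign_prod_sub (Q : Finset ℝ) (u : ℝ) (hu : u ∉ Q) :
    0 < (-1:ℝ)^(#(Q.filter (u < ·))) * ∏ r ∈ Q, (u - r) := by
  classical
  rw [← Finset.prod_filter_mul_prod_filter_not Q (u < ·) (fun r => u - r), ← mul_assoc]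
  have h1 : 0 < (-1:ℝ)^(#(Q.filter (u < ·))) * ∏ r ∈ Q.filter (u < ·), (u - r) :=
    pow_neg_one_mul_prod_pos _ _ (fun r hr => by
      have := (Finset.mem_filter.1 hr).2; linarith)
  have h2 : 0 < ∏ r ∈ Q.filter (fun r => ¬ u < r), (u - r) :=
    Finset.prod_pos (fun r hr => by
      obtain ⟨hrQ, hru⟩ := Finset.mem_filter.1 hr
      have : r ≠ u := fun h => hu (h ▸ hrQ)
      have : r < u := lt_of_le_of_ne (not_lt.1 hru) this
      linarith)
  positivity

lemma exists_root_between (f : Polynomial ℝ) {a b : ℝ} (hab : a < b)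
    (h : f.eval a * f.eval b < 0) : ∃ x, a < x ∧ x < b ∧ f.eval x = 0 := by
  have hc : ContinuousOn (fun x => f.eval x) (Set.Icc a b) := (f.continuous).continuousOn
  rcases lt_or_ge (f.eval a) 0 with ha | ha
  · have hb : 0 < f.eval b := by nlinarith
    have := intermediate_value_Ioo hab.le hc (a := a) (b := b) ⟨ha, hb⟩
    obtain ⟨x, hx, hfx⟩ := this
    exact ⟨x, hx.1, hx.2, hfx⟩
  · have ha' : 0 < f.eval a := by
      rcases ha.lt_or_eq with h' | h'
      · exact h'
      · exfalso; rw [← h'] at h; simp at h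
    have hb : f.eval b < 0 := by nlinarith
    obtain ⟨x, hx, hfx⟩ := intermediate_value_Ioo' hab.le hc (a := a) (b := b) ⟨hb, ha'⟩
    exact ⟨x, hx.1, hx.2, hfx⟩

lemma exists_eval_pos (g : Polynomial ℝ) (h0 : 0 < g.natDegree) (hl : 0 < g.leadingCoeff)
    (a : ℝ) : ∃ x, a < x ∧ 0 < g.eval x := by
  have hdeg : 0 < g.degree := natDegree_pos_iff_degree_pos.1 h0
  have ht := g.tendsto_atTop_of_leadingCoeff_nonneg hdeg hl.le
  have := (ht.eventually_gt_atTop 0).and (Filter.eventually_gt_atTop a)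
  obtain ⟨x, hx1, hx2⟩ := this.exists
  exact ⟨x, hx2, hx1⟩

end Helpers



lemma card_filter_ge (k j : ℕ) :
    #(Finset.univ.filter (fun i : Fin k => j ≤ (i : ℕ))) = k - j := by
  rcases Nat.lt_or_ge j k with h | h
  · have : Finset.univ.filter (fun i : Fin k => j ≤ (i : ℕ)) = Finset.Ici (⟨j, h⟩ : Fin k) := by
      ext i; simp [Fin.le_def]
    rw [this, Fin.card_Ici]
  · have : Finset.univ.filter (fun i : Fin k => j ≤ (i : ℕ)) = ∅ := by
      ext i; simp only [Finset.mem_filter, Finset.mem_univ, true_and, Finset.notMem_empty,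
        iff_false, not_le]
      omega
    rw [this]; simp; omega

lemma card_filter_image {k : ℕ} (s : Fin k → ℝ) (hs : Function.Injective s) (x : ℝ) (j : ℕ)
    (h : ∀ i : Fin k, x < s i ↔ j ≤ (i : ℕ)) :
    #((Finset.image s Finset.univ).filter (x < ·)) = k - j := by
  classical
  have h1 : (Finset.image s Finset.univ).filter (x < ·)
      = Finset.image s (Finset.univ.filter (fun i => x < s i)) := by
    ext r
    simp only [Finset.mem_filter, Finset.mem_image, Finset.mem_univ, true_and]
    constructor
    · rintro ⟨⟨i, rfl⟩, hx⟩; exact ⟨i, hx, rfl⟩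
    · rintro ⟨i, hx, rfl⟩; exact ⟨⟨i, rfl⟩, hx⟩
  rw [h1, Finset.card_image_of_injective _ hs]
  have h2 : (Finset.univ.filter (fun i : Fin k => x < s i))
      = Finset.univ.filter (fun i : Fin k => j ≤ (i : ℕ)) := by
    ext i; simp [h i]
  rw [h2, card_filter_ge]

lemma alt_roots (f : Polynomial ℝ) (N : ℕ) (hdeg : f.natDegree = N)
    (z : Fin (N+1) → ℝ) (hz : StrictMono z)
    (hsign : ∀ j : Fin (N+1), 0 < (-1:ℝ)^(N - (j:ℕ)) * f.eval (z j)) :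
    ∃ s : Fin N → ℝ, StrictMono s ∧
      (∀ j : Fin N, z j.castSucc < s j ∧ s j < z j.succ ∧ f.eval (s j) = 0) ∧
      f = C f.leadingCoeff * ∏ j, (X - C (s j)) := by
  classical
  have hf0 : f ≠ 0 := by
    intro h0
    have := hsign (Fin.last N)
    rw [h0] at this; simp at this
  have hopp : ∀ j : Fin N, ∃ x, z j.castSucc < x ∧ x < z j.succ ∧ f.eval x = 0 := by
    intro j
    have h1 := hsign j.castSucc
    have h2 := hsign j.succ
    have hc : (j.castSucc : ℕ) = (j : ℕ) := rfl
    have hsu : (j.succ : ℕ) = (j : ℕ) + 1 := rfl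
    have hNj : N - (j : ℕ) = (N - ((j : ℕ)+1)) + 1 := by omega
    rw [hc, hNj, pow_succ] at h1
    rw [hsu] at h2
    apply exists_root_between f (hz (Fin.castSucc_lt_succ (i := j)))
    nlinarith [mul_pos h1 h2, sq_nonneg ((-1:ℝ)^(N - ((j:ℕ)+1)))]
  choose s hs1 hs2 hs3 using hopp
  have hsm : StrictMono s := by
    intro j j' hjj'
    have h1 : s j < z j.succ := hs2 j
    have h2 : z j'.castSucc < s j' := hs1 j'
    have h3 : z j.succ ≤ z j'.castSucc := by
      apply hz.monotone
      rw [Fin.le_def]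
      simp only [Fin.val_succ, Fin.coe_castSucc]
      omega
    linarith
  refine ⟨s, hsm, fun j => ⟨hs1 j, hs2 j, hs3 j⟩, ?_⟩
  have hmem : ∀ j : Fin N, s j ∈ f.roots := fun j => (mem_roots hf0).2 (hs3 j)
  set F : Finset ℝ := Finset.image s Finset.univ with hF
  have hcardF : #F = N := by
    rw [hF, Finset.card_image_of_injective _ hsm.injective, Finset.card_univ, Fintype.card_fin]
  have hle : F.val ≤ f.roots := by
    rw [Multiset.le_iff_count]
    intro a
    by_cases ha : a ∈ F
    · rw [Multiset.count_eq_one_of_mem F.nodup ha, Multiset.one_le_count_iff_mem]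
      obtain ⟨j, _, rfl⟩ := Finset.mem_image.1 ha
      exact hmem j
    · rw [Multiset.count_eq_zero_of_notMem ha]
      omega
  have hcards : Multiset.card f.roots ≤ Multiset.card F.val := by
    calc Multiset.card f.roots ≤ f.natDegree := f.card_roots'
      _ = N := hdeg
      _ = Multiset.card F.val := by rw [← hcardF, Finset.card_def]
  have heq : f.roots = F.val := (Multiset.eq_of_le_of_card_le hle hcards).symm
  have hroots_card : Multiset.card f.roots = f.natDegree := by
    rw [heq, ← Finset.card_def, hcardF, hdeg]
  have key := Polynomial.C_leadingCoeff_mul_prod_multiset_X_sub_C hroots_card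
  rw [heq] at key
  calc f = C f.leadingCoeff * (Multiset.map (fun a => X - C a) F.val).prod := key.symm
    _ = C f.leadingCoeff * ∏ r ∈ F, (X - C r) := rfl
    _ = C f.leadingCoeff * ∏ j, (X - C (s j)) := by
        rw [hF, Finset.prod_image (fun a _ b _ h => hsm.injective h)]



/-- The inductive invariant: `q = c ∏_{r∈Q}(X-r)` with distinct real roots and
`p = c Σ_r w_r ∏_{r'≠r}(X-r')` with positive weights, i.e. `p/q` is a positive
discrete m-function. -/
def Good (p q : Polynomial ℝ) : Prop :=
  ∃ (Q : Finset ℝ) (w : ℝ → ℝ) (c : ℝ), Q.Nonempty ∧ 0 < c ∧ (∀ r ∈ Q, 0 < w r) ∧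
    q = C c * ∏ r ∈ Q, (X - C r) ∧
    p = C c * ∑ r ∈ Q, C (w r) * ∏ r' ∈ Q.erase r, (X - C r')

lemma monic_prodXsubC (Q : Finset ℝ) : (∏ r ∈ Q, (X - C r)).Monic :=
  monic_prod_of_monic _ _ (fun _ _ => monic_X_sub_C _)

lemma natDegree_prodXsubC (Q : Finset ℝ) : (∏ r ∈ Q, (X - C r)).natDegree = #Q := by
  rw [Polynomial.natDegree_prod _ _ (fun r _ => X_sub_C_ne_zero r)]
  simp

lemma eval_prodXsubC (Q : Finset ℝ) (x : ℝ) :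
    (∏ r ∈ Q, (X - C r)).eval x = ∏ r ∈ Q, (x - r) := by
  simp [eval_prod]

lemma aeval_prodXsubC (Q : Finset ℝ) (z : ℂ) :
    aeval z (∏ r ∈ Q, (X - C r)) = ∏ r ∈ Q, (z - (r : ℂ)) := by
  rw [map_prod]
  simp

-- sum part facts
lemma sumpoly_natDegree_le (Q : Finset ℝ) (w : ℝ → ℝ) :
    (∑ r ∈ Q, C (w r) * ∏ r' ∈ Q.erase r, (X - C r')).natDegree ≤ #Q - 1 := by
  apply Polynomial.natDegree_sum_le_of_forall_le
  intro r hr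
  apply le_trans (natDegree_C_mul_le _ _)
  rw [natDegree_prodXsubC, Finset.card_erase_of_mem hr]

lemma sumpoly_coeff (Q : Finset ℝ) (w : ℝ → ℝ) :
    (∑ r ∈ Q, C (w r) * ∏ r' ∈ Q.erase r, (X - C r')).coeff (#Q - 1) = ∑ r ∈ Q, w r := by
  rw [Polynomial.finset_sum_coeff]
  apply Finset.sum_congr rfl
  intro r hr
  rw [Polynomial.coeff_C_mul]
  have h1 : (∏ r' ∈ Q.erase r, (X - C r')).natDegree = #Q - 1 := by
    rw [natDegree_prodXsubC, Finset.card_erase_of_mem hr]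
  have := (monic_prodXsubC (Q.erase r))
  rw [← h1, Monic.coeff_natDegree this, mul_one]

lemma sumpoly_eval (Q : Finset ℝ) (w : ℝ → ℝ) (r₀ : ℝ) (hr₀ : r₀ ∈ Q) :
    (∑ r ∈ Q, C (w r) * ∏ r' ∈ Q.erase r, (X - C r')).eval r₀
      = w r₀ * ∏ r' ∈ Q.erase r₀, (r₀ - r') := by
  rw [Polynomial.eval_finset_sum]
  rw [Finset.sum_eq_single r₀]
  · simp [eval_prod]
  · intro r hr hne
    have : r₀ ∈ Q.erase r := Finset.mem_erase.2 ⟨fun h => hne h.symm, hr₀⟩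
    rw [eval_mul, eval_prod]
    rw [Finset.prod_eq_zero this (by simp)]
    ring
  · intro h; exact absurd hr₀ h

lemma squarefree_C_mul (c : ℝ) (hc : c ≠ 0) (f : Polynomial ℝ) (hf : Squarefree f) :
    Squarefree (C c * f) := by
  apply hf.squarefree_of_dvd
  exact (associated_unit_mul_left f (C c) (isUnit_C.2 (isUnit_iff_ne_zero.2 hc))).dvd

lemma squarefree_prodXsubC {k : ℕ} (s : Fin k → ℝ) (hs : Function.Injective s) :
    Squarefree (∏ j, (X - C (s j))) :=
  (Polynomial.separable_prod_X_sub_C_iff.2 hs).squarefree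

lemma real_roots_of_factor {k : ℕ} (c : ℝ) (hc : c ≠ 0) (v : Fin k → ℝ) (z : ℂ)
    (h : aeval z (C c * ∏ j, (X - C (v j))) = 0) : z.im = 0 := by
  rw [map_mul, aeval_C, map_prod] at h
  simp only [map_sub, aeval_X, aeval_C] at h
  have hc' : (algebraMap ℝ ℂ) c ≠ 0 := by
    simpa using hc
  rcases mul_eq_zero.1 h with h' | h'
  · exact absurd h' hc'
  · obtain ⟨j, _, hj⟩ := Finset.prod_eq_zero_iff.1 h'
    have : z = ((v j : ℝ) : ℂ) := by
      have := sub_eq_zero.1 hj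
      simpa using this
    rw [this]
    simp

/-- Everything the theorem needs, from `Good`. -/
lemma good_main (p q : Polynomial ℝ) (h : Good p q) :
    (∀ z : ℂ, aeval z p = 0 → z.im = 0) ∧
    (∀ z : ℂ, aeval z q = 0 → z.im = 0) ∧
    Squarefree p ∧ Squarefree q ∧
    q.natDegree = p.natDegree + 1 ∧
    ∃ s : Fin p.natDegree → ℝ, ∃ t : Fin (p.natDegree + 1) → ℝ,
      StrictMono s ∧ StrictMono t ∧
      (∀ i, p.eval (s i) = 0) ∧
      (∀ i, q.eval (t i) = 0) ∧
      (∀ i : Fin p.natDegree, t i.castSucc < s i ∧ s i < t i.succ) := by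
  classical
  obtain ⟨Q, w, c, hQne, hc, hw, hq, hp⟩ := h
  obtain ⟨n, hn⟩ : ∃ n, #Q = n + 1 := ⟨#Q - 1, (Nat.succ_pred_eq_of_pos hQne.card_pos).symm⟩
  set t : Fin (n+1) → ℝ := fun j => Q.orderEmbOfFin hn j with ht
  have htm : StrictMono t := (Q.orderEmbOfFin hn).strictMono
  have htQ : ∀ j, t j ∈ Q := fun j => Q.orderEmbOfFin_mem hn j
  have hQim : Q = Finset.image t Finset.univ := by
    apply (Finset.eq_of_subset_of_card_le ?_ ?_).symm
    · intro r hr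
      obtain ⟨j, _, rfl⟩ := Finset.mem_image.1 hr
      exact htQ j
    · rw [Finset.card_image_of_injective _ htm.injective, Finset.card_univ, Fintype.card_fin, hn]
  -- degree of q
  have hdq : q.natDegree = n + 1 := by
    rw [hq, Polynomial.natDegree_C_mul hc.ne', natDegree_prodXsubC, hn]
  -- degree and leading coeff of p
  have hsum_pos : 0 < ∑ r ∈ Q, w r := Finset.sum_pos hw hQne
  have hcoeff : p.coeff n = c * ∑ r ∈ Q, w r := by
    rw [hp, Polynomial.coeff_C_mul]
    have h2 := sumpoly_coeff Q w
    have h3 : #Q - 1 = n := by omega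
    rw [h3] at h2
    rw [h2]
  have hcoeff_ne : p.coeff n ≠ 0 := by
    rw [hcoeff]; positivity
  have hdp : p.natDegree = n := by
    apply le_antisymm
    · rw [hp]
      apply le_trans (natDegree_C_mul_le _ _)
      have := sumpoly_natDegree_le Q w
      omega
    · exact le_natDegree_of_ne_zero hcoeff_ne
  have hlead : p.leadingCoeff = c * ∑ r ∈ Q, w r := by
    rw [Polynomial.leadingCoeff, hdp, hcoeff]
  have hlead_pos : 0 < p.leadingCoeff := by rw [hlead]; positivity
  -- sign of p at the t j
  have hsign : ∀ j : Fin (n+1), 0 < (-1:ℝ)^(n - (j:ℕ)) * p.eval (t j) := by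
    intro j
    have hmem := htQ j
    have heval : p.eval (t j) = c * (w (t j) * ∏ r' ∈ Q.erase (t j), (t j - r')) := by
      rw [hp, eval_mul, eval_C, sumpoly_eval Q w _ hmem]
    have hcard : #((Q.erase (t j)).filter (t j < ·)) = n - (j:ℕ) := by
      have h1 : (Q.erase (t j)).filter (t j < ·) = Q.filter (t j < ·) := by
        ext r
        simp only [Finset.mem_filter, Finset.mem_erase]
        constructor
        · rintro ⟨⟨_, hr⟩, hlt⟩; exact ⟨hr, hlt⟩
        · rintro ⟨hr, hlt⟩; exact ⟨⟨fun h => by rw [h] at hlt; exact lt_irrefl _ hlt, hr⟩, hlt⟩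
      rw [h1, hQim]
      have := card_filter_image t htm.injective (t j) ((j:ℕ)+1) (fun i => by
        constructor
        · intro hlt
          have : j < i := htm.lt_iff_lt.1 hlt
          exact this
        · intro hle
          apply htm
          exact hle)
      rw [this]
      omega
    have hps := sign_prod_sub (Q.erase (t j)) (t j) (Finset.notMem_erase _ _)
    rw [hcard] at hps
    have hwj := hw _ hmem
    calc (0:ℝ) < (c * w (t j)) * ((-1:ℝ)^(n - (j:ℕ)) * ∏ r' ∈ Q.erase (t j), (t j - r')) := by
          positivity
      _ = (-1:ℝ)^(n - (j:ℕ)) * p.eval (t j) := by rw [heval]; ring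
  obtain ⟨s, hsm, hsprop, hfact⟩ := alt_roots p n hdp t htm hsign
  -- q evals
  have hqeval : ∀ j, q.eval (t j) = 0 := by
    intro j
    rw [hq, eval_mul, eval_prodXsubC]
    rw [Finset.prod_eq_zero (htQ j) (by ring)]
    ring
  -- q factorization over t
  have hqfact : q = C c * ∏ j, (X - C (t j)) := by
    rw [hq, hQim, Finset.prod_image (fun a _ b _ hab => htm.injective hab)]
  refine ⟨?_, ?_, ?_, ?_, ?_, ?_⟩
  · intro z hz
    rw [hfact] at hz
    exact real_roots_of_factor _ hlead_pos.ne' _ _ hz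
  · intro z hz
    rw [hqfact] at hz
    exact real_roots_of_factor _ hc.ne' _ _ hz
  · rw [hfact]
    exact squarefree_C_mul _ hlead_pos.ne' _ (squarefree_prodXsubC s hsm.injective)
  · rw [hqfact]
    exact squarefree_C_mul _ hc.ne' _ (squarefree_prodXsubC t htm.injective)
  · rw [hdq, hdp]
  · refine ⟨fun i => s (Fin.cast hdp i), fun i => t (Fin.cast (by rw [hdp]) i),
      ?_, ?_, ?_, ?_, ?_⟩
    · intro a b hab
      exact hsm hab
    · intro a b hab
      exact htm hab
    · intro i; exact (hsprop (Fin.cast hdp i)).2.2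
    · intro i; exact hqeval _
    · intro i
      exact ⟨(hsprop (Fin.cast hdp i)).1, (hsprop (Fin.cast hdp i)).2.1⟩

lemma pos_mul_inv_of_sign (k x y : ℝ) (hk : k * k = 1) (hx : 0 < k * x) (hy : 0 < k * y) :
    0 < x * y⁻¹ := by
  have hk0 : k ≠ 0 := by intro h; rw [h] at hk; simp at hk
  have hy0 : y ≠ 0 := by rintro rfl; rw [mul_zero] at hy; exact lt_irrefl _ hy
  have h1 : 0 < (k * x) * (k * y)⁻¹ := mul_pos hx (inv_pos.2 hy)
  have h2 : (k * x) * (k * y)⁻¹ = x * y⁻¹ := by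
    rw [mul_inv]
    field_simp
  rwa [h2] at h1

/-- One recursion step: building the invariant at a vertex from its children. -/
lemma step {ι : Type*} (S : Finset ι) (p q Cc : ι → Polynomial ℝ) (lamy : ι → ℝ)
    (A B : Polynomial ℝ) (lamx β : ℝ) (hlamx : 0 < lamx) (hlamy : ∀ y ∈ S, 0 < lamy y)
    (hG : ∀ y ∈ S, Good (p y) (q y))
    (hA : A = S.lcm q)
    (hdiv : ∀ y ∈ S, Cc y * q y = A * p y)
    (hrec : C lamx * B = (X - C β) * A - ∑ y ∈ S, C (lamy y) * Cc y) :
    Good A B := by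
  classical
  choose! Q w c hQne hc hw hq hp using hG
  set R : Finset ℝ := S.sup Q with hR
  have hmemR : ∀ r : ℝ, r ∈ R ↔ ∃ y ∈ S, r ∈ Q y := fun r => Finset.mem_sup
  have hQsub : ∀ y ∈ S, Q y ⊆ R := fun y hy => Finset.le_sup hy
  -- A = ∏ (X - r) over R
  have hAeq : A = ∏ r ∈ R, (X - C r) := by
    have hqdvd : ∀ y ∈ S, q y ∣ ∏ r ∈ R, (X - C r) := by
      intro y hy
      rw [hq y hy]
      exact ((associated_unit_mul_left _ _ (isUnit_C.2 (isUnit_iff_ne_zero.2 (hc y hy).ne'))).dvd).trans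
        (Finset.prod_dvd_prod_of_subset _ _ _ (hQsub y hy))
    have hdvd1 : S.lcm q ∣ ∏ r ∈ R, (X - C r) := Finset.lcm_dvd hqdvd
    have hdvd2 : (∏ r ∈ R, (X - C r)) ∣ S.lcm q := by
      apply Finset.prod_dvd_of_coprime
      · intro a ha b hb hab
        exact Polynomial.pairwise_coprime_X_sub_C (Function.injective_id) hab
      · intro r hr
        obtain ⟨y, hy, hrQ⟩ := hmemR r |>.1 hr
        refine dvd_trans ?_ (Finset.dvd_lcm hy)
        rw [hq y hy]
        exact (Finset.dvd_prod_of_mem _ hrQ).mul_left _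
    rw [hA]
    calc S.lcm q = normalize (S.lcm q) := (Finset.normalize_lcm).symm
      _ = normalize (∏ r ∈ R, (X - C r)) := normalize_eq_normalize hdvd1 hdvd2
      _ = ∏ r ∈ R, (X - C r) := (monic_prodXsubC R).normalize_eq_self
  set m : ℕ := #R with hm
  have hAmonic : A.Monic := hAeq ▸ monic_prodXsubC R
  have hAdeg : A.natDegree = m := by rw [hAeq, natDegree_prodXsubC]
  -- key divisibility identity with explicit quotient
  have hkey : ∀ y ∈ S, C (c y) * Cc y = (∏ r ∈ R \ Q y, (X - C r)) * p y := by
    intro y hy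
    have hsplit : A = (∏ r ∈ R \ Q y, (X - C r)) * ∏ r ∈ Q y, (X - C r) := by
      rw [hAeq, Finset.prod_sdiff (hQsub y hy)]
    have h1 : (C (c y) * Cc y) * ∏ r ∈ Q y, (X - C r)
        = ((∏ r ∈ R \ Q y, (X - C r)) * p y) * ∏ r ∈ Q y, (X - C r) := by
      calc (C (c y) * Cc y) * ∏ r ∈ Q y, (X - C r)
          = Cc y * (C (c y) * ∏ r ∈ Q y, (X - C r)) := by ring
        _ = Cc y * q y := by rw [← hq y hy]
        _ = A * p y := hdiv y hy
        _ = ((∏ r ∈ R \ Q y, (X - C r)) * p y) * ∏ r ∈ Q y, (X - C r) := by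
            rw [hsplit]; ring
    exact mul_right_cancel₀ (monic_prodXsubC (Q y)).ne_zero h1
  -- degree bound on Cc y
  have hpdeg : ∀ y ∈ S, (p y).natDegree ≤ #(Q y) - 1 := by
    intro y hy
    rw [hp y hy]
    exact le_trans (natDegree_C_mul_le _ _) (sumpoly_natDegree_le _ _)
  have hCcdeg : ∀ y ∈ S, (Cc y).natDegree ≤ m - 1 := by
    intro y hy
    have h1 : (C (c y) * Cc y).natDegree = (Cc y).natDegree :=
      natDegree_C_mul (hc y hy).ne'
    rw [← h1, hkey y hy]
    apply le_trans (natDegree_mul_le)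
    have h2 := natDegree_prodXsubC (R \ Q y)
    have h3 : #(R \ Q y) = m - #(Q y) := by
      rw [Finset.card_sdiff_of_subset (hQsub y hy)]
    have h4 := hpdeg y hy
    have h5 : #(Q y) ≤ m := Finset.card_le_card (hQsub y hy)
    have h6 : 1 ≤ #(Q y) := (hQne y hy).card_pos
    omega
  -- degree and leading coeff of B
  have hsumdeg : (∑ y ∈ S, C (lamy y) * Cc y).natDegree ≤ m := by
    apply Polynomial.natDegree_sum_le_of_forall_le
    intro y hy
    exact le_trans (natDegree_C_mul_le _ _) (le_trans (hCcdeg y hy) (Nat.sub_le _ _))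
  have hXAdeg : ((X - C β) * A).natDegree = m + 1 := by
    rw [Polynomial.natDegree_mul (X_sub_C_ne_zero β) hAmonic.ne_zero,
      natDegree_X_sub_C, hAdeg]
    omega
  have hXAmonic : ((X - C β) * A).Monic := (monic_X_sub_C β).mul hAmonic
  have hGdeg : ((X - C β) * A - ∑ y ∈ S, C (lamy y) * Cc y).natDegree = m + 1 := by
    rw [natDegree_sub_eq_left_of_natDegree_lt, hXAdeg]
    rw [hXAdeg]; omega
  have hGlead : ((X - C β) * A - ∑ y ∈ S, C (lamy y) * Cc y).leadingCoeff = 1 := by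
    rw [Polynomial.leadingCoeff, hGdeg, Polynomial.coeff_sub,
      Polynomial.coeff_eq_zero_of_natDegree_lt (lt_of_le_of_lt hsumdeg (by omega)), sub_zero]
    have := hXAmonic.coeff_natDegree
    rwa [hXAdeg] at this
  have hBdeg : B.natDegree = m + 1 := by
    have := congrArg Polynomial.natDegree hrec
    rwa [natDegree_C_mul hlamx.ne', hGdeg] at this
  have hBlead : B.leadingCoeff = lamx⁻¹ := by
    have h1 : (C lamx * B).leadingCoeff = lamx * B.leadingCoeff := by
      rw [Polynomial.leadingCoeff, natDegree_C_mul hlamx.ne', Polynomial.coeff_C_mul]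
      rfl
    rw [hrec, hGlead] at h1
    field_simp at h1 ⊢
    linarith [h1]
  have hBne : B ≠ 0 := by
    intro h
    rw [h, Polynomial.leadingCoeff_zero] at hBlead
    exact (inv_ne_zero hlamx.ne') hBlead.symm
  -- evaluation of Cc at points of R
  have hCceval : ∀ y ∈ S, ∀ u ∈ R, (Cc y).eval u =
      (if u ∈ Q y then w y u * ∏ r ∈ R.erase u, (u - r) else 0) := by
    intro y hy u hu
    have hk := congrArg (Polynomial.eval u) (hkey y hy)
    rw [eval_mul, eval_mul, eval_C, eval_prodXsubC] at hk
    by_cases hmem : u ∈ Q y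
    · rw [if_pos hmem]
      have hpe : (p y).eval u = c y * (w y u * ∏ r' ∈ (Q y).erase u, (u - r')) := by
        rw [hp y hy, eval_mul, eval_C, sumpoly_eval _ _ _ hmem]
      rw [hpe] at hk
      have hprod : (∏ r ∈ R \ Q y, (u - r)) * ∏ r' ∈ (Q y).erase u, (u - r')
          = ∏ r ∈ R.erase u, (u - r) := by
        have hsub : (Q y).erase u ⊆ R.erase u := fun r hr =>
          Finset.mem_erase.2 ⟨(Finset.mem_erase.1 hr).1, hQsub y hy (Finset.mem_erase.1 hr).2⟩
        rw [← Finset.prod_sdiff hsub]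
        have hsets : R.erase u \ (Q y).erase u = R \ Q y := by
          ext r
          simp only [Finset.mem_sdiff, Finset.mem_erase, not_and]
          constructor
          · rintro ⟨⟨hru, hrR⟩, hne⟩
            exact ⟨hrR, fun hrq => (hne hru) hrq⟩
          · rintro ⟨hrR, hrq⟩
            exact ⟨⟨fun h => hrq (h ▸ hmem), hrR⟩, fun _ hh => hrq hh⟩
        rw [hsets]
      apply mul_left_cancel₀ (hc y hy).ne'
      rw [hk, ← hprod]
      ring
    · rw [if_neg hmem]
      have h0 : (∏ r ∈ R \ Q y, (u - r)) = 0 :=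
        Finset.prod_eq_zero (Finset.mem_sdiff.2 ⟨hu, hmem⟩) (sub_self u)
      rw [h0, zero_mul] at hk
      have := mul_eq_zero.1 hk
      rcases this with h | h
      · exact absurd h (by simpa using (hc y hy).ne')
      · exact h
  -- evaluation of B at points of R
  have hBeval : ∀ u ∈ R, lamx * B.eval u =
      - ((∑ y ∈ S.filter (fun y => u ∈ Q y), lamy y * w y u) * ∏ r ∈ R.erase u, (u - r)) := by
    intro u hu
    have h0 := congrArg (Polynomial.eval u) hrec
    have hAu : A.eval u = 0 := by
      rw [hAeq, eval_prodXsubC]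
      exact Finset.prod_eq_zero hu (sub_self u)
    rw [eval_mul, eval_C, eval_sub, eval_mul, hAu, mul_zero, Polynomial.eval_finset_sum] at h0
    have hterm : ∀ y ∈ S, (C (lamy y) * Cc y).eval u
        = (if u ∈ Q y then lamy y * w y u else 0) * ∏ r ∈ R.erase u, (u - r) := by
      intro y hy
      rw [eval_mul, eval_C, hCceval y hy u hu]
      split_ifs with h
      · ring
      · simp
    rw [Finset.sum_congr rfl hterm, ← Finset.sum_mul, ← Finset.sum_filter] at h0
    rw [h0]
    ring
  have hWpos : ∀ u ∈ R, 0 < ∑ y ∈ S.filter (fun y => u ∈ Q y), lamy y * w y u := by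
    intro u hu
    obtain ⟨y₀, hy₀S, hy₀Q⟩ := (hmemR u).1 hu
    apply Finset.sum_pos
    · intro y hy
      obtain ⟨hyS, hyQ⟩ := Finset.mem_filter.1 hy
      exact mul_pos (hlamy y hyS) (hw y hyS u hyQ)
    · exact ⟨y₀, Finset.mem_filter.2 ⟨hy₀S, hy₀Q⟩⟩
  -- sorted enumeration of R
  set e : Fin m → ℝ := fun i => R.orderEmbOfFin hm i with he
  have hemono : StrictMono e := (R.orderEmbOfFin hm).strictMono
  have heR : ∀ i, e i ∈ R := fun i => R.orderEmbOfFin_mem hm i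
  have hRim : R = Finset.image e Finset.univ := by
    apply (Finset.eq_of_subset_of_card_le ?_ ?_).symm
    · intro r hr
      obtain ⟨i, _, rfl⟩ := Finset.mem_image.1 hr
      exact heR i
    · rw [Finset.card_image_of_injective _ hemono.injective, Finset.card_univ,
        Fintype.card_fin, ← hm]
  -- bounds
  have hBdegpos : 0 < B.natDegree := by omega
  have hBleadpos : 0 < B.leadingCoeff := by rw [hBlead]; positivity
  obtain ⟨b₂, hb₂⟩ := R.exists_le
  obtain ⟨M₂, hM₂gt, hM₂pos⟩ := exists_eval_pos B hBdegpos hBleadpos b₂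
  set g : Polynomial ℝ := C ((-1:ℝ)^(m+1)) * B.comp (-X) with hgdef
  have hk1 : ((-1:ℝ)^(m+1)) * ((-1:ℝ)^(m+1)) = 1 := by
    rw [← pow_add]
    exact Even.neg_one_pow ⟨m+1, rfl⟩
  have hk0 : ((-1:ℝ)^(m+1)) ≠ 0 := by
    intro h; rw [h] at hk1; simp at hk1
  have hcompdeg : (B.comp (-X)).natDegree = m + 1 := by
    rw [natDegree_comp, hBdeg]
    simp
  have hgdeg : g.natDegree = m + 1 := by
    rw [hgdef, natDegree_C_mul hk0, hcompdeg]
  have hglead : 0 < g.leadingCoeff := by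
    have h1 : (B.comp (-X)).leadingCoeff = B.leadingCoeff * (-X : Polynomial ℝ).leadingCoeff ^ B.natDegree := by
      apply Polynomial.leadingCoeff_comp
      simp
    have h2 : (-X : Polynomial ℝ).leadingCoeff = -1 := by
      rw [leadingCoeff_neg, leadingCoeff_X]
    have h3 : g.leadingCoeff = ((-1:ℝ)^(m+1)) * (B.comp (-X)).leadingCoeff := by
      rw [hgdef, Polynomial.leadingCoeff_mul, leadingCoeff_C]
    rw [h3, h1, h2, hBlead, hBdeg]
    have : (-1:ℝ)^(m+1) * (lamx⁻¹ * (-1)^(m+1)) = lamx⁻¹ * ((-1:ℝ)^(m+1) * (-1)^(m+1)) := by ring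
    rw [this, hk1, mul_one]
    positivity
  obtain ⟨b₁, hb₁⟩ := (insert (-M₂) (R.image (fun r => -r))).exists_le
  obtain ⟨M₁, hM₁gt, hM₁pos⟩ := exists_eval_pos g (by omega) hglead b₁
  have hgeval : ∀ x : ℝ, g.eval x = (-1:ℝ)^(m+1) * B.eval (-x) := by
    intro x
    rw [hgdef, eval_mul, eval_C, eval_comp]
    simp
  have hlow : ∀ i, -M₁ < e i := by
    intro i
    have h1 : -(e i) ≤ b₁ := hb₁ _ (Finset.mem_insert_of_mem (Finset.mem_image_of_mem _ (heR i)))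
    linarith
  have hhigh : ∀ i, e i < M₂ := fun i => lt_of_le_of_lt (hb₂ _ (heR i)) hM₂gt
  have hlowhigh : -M₁ < M₂ := by
    have h1 : -M₂ ≤ b₁ := hb₁ _ (Finset.mem_insert_self _ _)
    linarith
  -- the extended sequence of points
  set z : Fin (m+2) → ℝ := fun j =>
    if h1 : (j:ℕ) = 0 then -M₁ else if h2 : (j:ℕ) ≤ m then e ⟨(j:ℕ)-1, by omega⟩ else M₂
    with hzdef
  have hz0 : ∀ (j : Fin (m+2)), (j:ℕ) = 0 → z j = -M₁ := by
    intro j hj; rw [hzdef]; simp only; rw [dif_pos hj]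
  have hzmid : ∀ (j : Fin (m+2)) (hj1 : (j:ℕ) ≠ 0) (hj2 : (j:ℕ) ≤ m),
      z j = e ⟨(j:ℕ)-1, by omega⟩ := by
    intro j hj1 hj2; rw [hzdef]; simp only; rw [dif_neg hj1, dif_pos hj2]
  have hzlast : ∀ (j : Fin (m+2)), (j:ℕ) = m+1 → z j = M₂ := by
    intro j hj; rw [hzdef]; simp only; rw [dif_neg (by omega), dif_neg (by omega)]
  have hzmono : StrictMono z := by
    intro a b hab
    rw [Fin.lt_def] at hab
    have hb' : (b:ℕ) ≠ 0 := by omega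
    by_cases ha0 : (a:ℕ) = 0
    · rw [hz0 a ha0]
      by_cases hb2 : (b:ℕ) ≤ m
      · rw [hzmid b hb' hb2]; exact hlow _
      · rw [hzlast b (by omega)]; exact hlowhigh
    · by_cases ha2 : (a:ℕ) ≤ m
      · rw [hzmid a ha0 ha2]
        by_cases hb2 : (b:ℕ) ≤ m
        · rw [hzmid b hb' hb2]
          exact hemono (by simp [Fin.lt_def]; omega)
        · rw [hzlast b (by omega)]; exact hhigh _
      · omega
  -- the sign condition
  have hsign : ∀ j : Fin (m+2), 0 < (-1:ℝ)^((m+1) - (j:ℕ)) * B.eval (z j) := by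
    intro j
    by_cases hj0 : (j:ℕ) = 0
    · rw [hz0 j hj0, hj0, Nat.sub_zero]
      have := hM₁pos
      rw [hgeval M₁] at this
      exact this
    · by_cases hj2 : (j:ℕ) ≤ m
      · rw [hzmid j hj0 hj2]
        set u : ℝ := e ⟨(j:ℕ)-1, by omega⟩ with hu
        have huR : u ∈ R := heR _
        have hupos := hBeval u huR
        have hWu := hWpos u huR
        -- count of points above u
        have hcount : #(R.filter (u < ·)) = m - (j:ℕ) := by
          rw [hRim]
          have := card_filter_image e hemono.injective u (j:ℕ) (fun i => by
            constructor
            · intro hlt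
              have := hemono.lt_iff_lt.1 hlt
              simp [Fin.lt_def] at this
              omega
            · intro hle
              apply hemono
              simp [Fin.lt_def]
              omega)
          rw [this]
        have hcount' : #((R.erase u).filter (u < ·)) = m - (j:ℕ) := by
          rw [← hcount]
          congr 1
          ext r
          simp only [Finset.mem_filter, Finset.mem_erase]
          constructor
          · rintro ⟨⟨_, hr⟩, hlt⟩; exact ⟨hr, hlt⟩
          · rintro ⟨hr, hlt⟩
            exact ⟨⟨fun h => by rw [h] at hlt; exact lt_irrefl _ hlt, hr⟩, hlt⟩
        have hPP := sign_prod_sub (R.erase u) u (Finset.notMem_erase _ _)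
        rw [hcount'] at hPP
        set Wsum : ℝ := ∑ y ∈ S.filter (fun y => u ∈ Q y), lamy y * w y u with hWsum
        set Pprod : ℝ := ∏ r ∈ R.erase u, (u - r) with hPprod
        have hBu : B.eval u = lamx⁻¹ * -(Wsum * Pprod) := by
          rw [← hupos, ← mul_assoc, inv_mul_cancel₀ hlamx.ne', one_mul]
        have hexp : (m+1) - (j:ℕ) = (m - (j:ℕ)) + 1 := by omega
        rw [hBu, hexp, pow_succ]
        have hinv : 0 < lamx⁻¹ := inv_pos.2 hlamx
        nlinarith [mul_pos (mul_pos hWu hinv) hPP]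
      · have hjlast : (j:ℕ) = m+1 := by omega
        rw [hzlast j hjlast, hjlast, Nat.sub_self, pow_zero, one_mul]
        exact hM₂pos
  obtain ⟨s, hsm, hsprop, hBfact⟩ := alt_roots B (m+1) hBdeg z hzmono hsign
  rw [hBlead] at hBfact
  -- the new root set
  set Q' : Finset ℝ := Finset.image s Finset.univ with hQ'
  have hQ'card : #Q' = m + 1 := by
    rw [hQ', Finset.card_image_of_injective _ hsm.injective, Finset.card_univ, Fintype.card_fin]
  have hQ'ne : Q'.Nonempty := by
    rw [hQ']
    exact (Finset.univ_nonempty).image _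
  -- relation between s and e
  have hzei : ∀ i : Fin m, e i = z ⟨(i:ℕ)+1, by omega⟩ := by
    intro i
    have h1 := hzmid ⟨(i:ℕ)+1, by omega⟩ (by simp) (by simp only [Fin.val_mk]; omega)
    rw [h1]
    have h2 : (⟨(i:ℕ)+1-1, by omega⟩ : Fin m) = i := by ext; simp
    rw [h2]
  have hse : ∀ (j : Fin (m+1)) (i : Fin m), s j < e i ↔ (j:ℕ) ≤ (i:ℕ) := by
    intro j i
    constructor
    · intro hlt
      by_contra hcon
      push_neg at hcon
      have h1 : z ⟨(i:ℕ)+1, by omega⟩ ≤ z j.castSucc := by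
        apply hzmono.monotone
        rw [Fin.le_def]
        simp only [Fin.coe_castSucc]
        omega
      have h2 := (hsprop j).1
      rw [hzei i] at hlt
      linarith
    · intro hle
      have h1 : z j.succ ≤ z ⟨(i:ℕ)+1, by omega⟩ := by
        apply hzmono.monotone
        rw [Fin.le_def]
        simp only [Fin.val_succ]
        omega
      have h2 := (hsprop j).2.1
      rw [hzei i]
      linarith
  have hsnotR : ∀ j : Fin (m+1), s j ∉ R := by
    intro j hmem
    rw [hRim] at hmem
    obtain ⟨i, _, hie⟩ := Finset.mem_image.1 hmem
    rcases Nat.lt_or_ge (i:ℕ) (j:ℕ) with h | h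
    · have h1 : z ⟨(i:ℕ)+1, by omega⟩ ≤ z j.castSucc := by
        apply hzmono.monotone
        rw [Fin.le_def]
        simp only [Fin.coe_castSucc]
        omega
      have h2 := (hsprop j).1
      have h3 := hzei i
      rw [hie] at h3
      linarith [h3 ▸ h1]
    · have : s j < e i := (hse j i).2 h
      rw [hie] at this
      exact lt_irrefl _ this
  -- sign of A at the roots of B
  have hAsign : ∀ j : Fin (m+1), 0 < (-1:ℝ)^(m - (j:ℕ)) * A.eval (s j) := by
    intro j
    have hAe : A.eval (s j) = ∏ r ∈ R, (s j - r) := by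
      rw [hAeq, eval_prodXsubC]
    have hcount : #(R.filter (s j < ·)) = m - (j:ℕ) := by
      rw [hRim]
      have := card_filter_image e hemono.injective (s j) (j:ℕ) (fun i => hse j i)
      rw [this]
    have := sign_prod_sub R (s j) (hsnotR j)
    rw [hcount, ← hAe] at this
    exact this
  -- sign of the product over the other roots of B
  have hQ'sign : ∀ j : Fin (m+1), 0 < (-1:ℝ)^(m - (j:ℕ)) * ∏ r' ∈ Q'.erase (s j), (s j - r') := by
    intro j
    have hnot : s j ∉ Q'.erase (s j) := Finset.notMem_erase _ _
    have hcount : #((Q'.erase (s j)).filter (s j < ·)) = m - (j:ℕ) := by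
      have h1 : (Q'.erase (s j)).filter (s j < ·) = Q'.filter (s j < ·) := by
        ext r
        simp only [Finset.mem_filter, Finset.mem_erase]
        constructor
        · rintro ⟨⟨_, hr⟩, hlt⟩; exact ⟨hr, hlt⟩
        · rintro ⟨hr, hlt⟩
          exact ⟨⟨fun h => by rw [h] at hlt; exact lt_irrefl _ hlt, hr⟩, hlt⟩
      rw [h1, hQ']
      have := card_filter_image s hsm.injective (s j) ((j:ℕ)+1) (fun i => by
        constructor
        · intro hlt
          have := hsm.lt_iff_lt.1 hlt
          rw [Fin.lt_def] at this
          omega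
        · intro hle
          apply hsm
          rw [Fin.lt_def]
          omega)
      rw [this]
      omega
    have := sign_prod_sub (Q'.erase (s j)) (s j) hnot
    rwa [hcount] at this
  -- weights
  set w' : ℝ → ℝ := fun r => lamx * A.eval r * (∏ r' ∈ Q'.erase r, (r - r'))⁻¹ with hw'
  have hw'pos : ∀ r ∈ Q', 0 < w' r := by
    intro r hr
    obtain ⟨j, _, rfl⟩ := Finset.mem_image.1 hr
    rw [hw']
    simp only
    rw [mul_assoc]
    apply mul_pos hlamx
    apply pos_mul_inv_of_sign ((-1:ℝ)^(m - (j:ℕ)))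
    · rw [← pow_add]
      exact Even.neg_one_pow ⟨m - (j:ℕ), rfl⟩
    · exact hAsign j
    · exact hQ'sign j
  -- factorization of B over Q'
  have hBfact' : B = C lamx⁻¹ * ∏ r ∈ Q', (X - C r) := by
    rw [hBfact, hQ', Finset.prod_image (fun a _ b _ hab => hsm.injective hab)]
  -- Lagrange interpolation of A at the roots of B
  have hAne : A ≠ 0 := hAmonic.ne_zero
  have hdegA : A.degree < (#Q' : ℕ) := by
    rw [Polynomial.degree_eq_natDegree hAne, hAdeg, hQ'card]
    exact_mod_cast Nat.lt_succ_self m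
  have hinterp := Lagrange.eq_interpolate (s := Q') (v := id) (Set.injOn_id _) hdegA
  rw [Lagrange.interpolate_apply] at hinterp
  have hAfact : A = C lamx⁻¹ * ∑ r ∈ Q', C (w' r) * ∏ r' ∈ Q'.erase r, (X - C r') := by
    rw [Finset.mul_sum]
    rw [hinterp]
    apply Finset.sum_congr rfl
    intro r hr
    have hbasis : Lagrange.basis Q' id r
        = C (∏ r' ∈ Q'.erase r, (r - r')⁻¹) * ∏ r' ∈ Q'.erase r, (X - C r') := by
      rw [Lagrange.basis, map_prod, ← Finset.prod_mul_distrib]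
      apply Finset.prod_congr rfl
      intro r' _
      rw [Lagrange.basisDivisor]
      simp
    have hrr : A.eval r * ∏ r' ∈ Q'.erase r, (r - r')⁻¹
        = lamx⁻¹ * (lamx * A.eval r * (∏ r' ∈ Q'.erase r, (r - r'))⁻¹) := by
      rw [Finset.prod_inv_distrib]
      field_simp
    rw [hbasis, hw']
    simp only [id_eq]
    rw [← mul_assoc, ← mul_assoc, ← C_mul, ← C_mul, hrr]
  exact ⟨Q', w', lamx⁻¹, hQ'ne, inv_pos.2 hlamx, hw'pos, hBfact', hAfact⟩

/-- The tree polynomials `P x x` and `P x x'` (defined by the recursion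
`λ_x P_{x,x'} = (z−β_x)P_{x,x} − Σ_{y∈N_x} λ_y P_{x,y}`, `P_{x,x} = lcm{P_{y,x}}`,
`P_{x,y} P_{y,x} = P_{x,x} P_{y,y}`, with positive leading coefficients) have only
real, simple zeros, `deg P_{x,x'} = deg P_{x,x} + 1`, and the zeros of `P_{x,x}`
strictly interlace those of `P_{x,x'}`. -/


theorem stmt_13 (T : JTree) (lam beta : T.V → ℝ) (hlam : ∀ t, 0 < lam t)
    (P : T.V → T.V → Polynomial ℝ)
    (hlead : ∀ x : T.V, 0 < (P x x).leadingCoeff ∧ 0 < (P x (T.parent x)).leadingCoeff)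
    (hrec : ∀ x : T.V, Polynomial.C (lam x) * P x (T.parent x) =
      (Polynomial.X - Polynomial.C (beta x)) * P x x -
        ∑ y ∈ T.children x, Polynomial.C (lam y) * P x y)
    (hlcm : ∀ x : T.V, P x x = (T.children x).lcm fun y => P y x)
    (hdiv : ∀ x : T.V, ∀ y ∈ T.children x, P x y * P y x = P x x * P y y) :
    ∀ x : T.V,
      (∀ z : ℂ, Polynomial.aeval z (P x x) = 0 → z.im = 0) ∧
      (∀ z : ℂ, Polynomial.aeval z (P x (T.parent x)) = 0 → z.im = 0) ∧
      Squarefree (P x x) ∧ Squarefree (P x (T.parent x)) ∧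
      (P x (T.parent x)).natDegree = (P x x).natDegree + 1 ∧
      ∃ s : Fin (P x x).natDegree → ℝ, ∃ t : Fin ((P x x).natDegree + 1) → ℝ,
        StrictMono s ∧ StrictMono t ∧
        (∀ i, (P x x).eval (s i) = 0) ∧
        (∀ i, (P x (T.parent x)).eval (t i) = 0) ∧
        (∀ i : Fin (P x x).natDegree, t i.castSucc < s i ∧ s i < t i.succ) := by
  intro x₀
  classical
  have level_iter : ∀ (k : ℕ) (t : T.V), T.level (T.parent^[k] t) = T.level t + k := by
    intro k
    induction k with
    | zero => simp
    | succ n ih =>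
      intro t
      rw [Function.iterate_succ_apply', T.level_parent, ih]
      omega
  have hGood : ∀ (n : ℕ) (x : T.V), ((T.subtree_finite x).toFinset.card ≤ n) →
      Good (P x x) (P x (T.parent x)) := by
    intro n
    induction n with
    | zero =>
      intro x hx
      exfalso
      have hxmem : x ∈ (T.subtree_finite x).toFinset := by
        rw [Set.Finite.mem_toFinset]; exact ⟨0, rfl⟩
      have := Finset.card_pos.2 ⟨x, hxmem⟩
      omega
    | succ n ih =>
      intro x hx
      have hxmem : x ∈ (T.subtree_finite x).toFinset := by
        rw [Set.Finite.mem_toFinset]; exact ⟨0, rfl⟩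
      apply step (T.children x) (fun y => P y y) (fun y => P y x) (fun y => P x y) lam
        (P x x) (P x (T.parent x)) (lam x) (beta x) (hlam x) (fun y _ => hlam y)
        ?_ (hlcm x) (hdiv x) (hrec x)
      intro y hy
      have hyx : T.parent y = x := (T.mem_children x y).1 hy
      have hsub : (T.subtree_finite y).toFinset ⊆ (T.subtree_finite x).toFinset.erase x := by
        intro t ht
        rw [Set.Finite.mem_toFinset] at ht
        obtain ⟨k, hk⟩ := ht
        refine Finset.mem_erase.2 ⟨?_, ?_⟩
        · intro htx
          subst htx
          have h1 : T.parent^[k+1] t = t := by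
            rw [Function.iterate_succ_apply', hk, hyx]
          have h2 := level_iter (k+1) t
          rw [h1] at h2
          omega
        · rw [Set.Finite.mem_toFinset]
          exact ⟨k+1, by rw [Function.iterate_succ_apply', hk, hyx]⟩
      have hcard : (T.subtree_finite y).toFinset.card ≤ n := by
        have h1 := Finset.card_le_card hsub
        rw [Finset.card_erase_of_mem hxmem] at h1
        omega
      have := ih y hcard
      rwa [hyx] at this
  exact good_main (P x₀ x₀) (P x₀ (T.parent x₀)) (hGood _ x₀ le_rfl)
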